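/- arXiv:2010.08794 — 2 statements merged into one kernel-verified Lean document; each statement's English description precedes it below -/
import Mathlib

section
/- Consider the dynamical system χ' = g(χ) on ℝ^m with g continuously differentiable and globally Lipschitz, output v = θ(χ) with θ continuously differentiable. Suppose that for some ε > 0 and N ∈ ℕ, for every trigonometric polynomial σ(t) = α + Σ_{n=1}^N (βⁿ sin(nt) + γⁿ cos(nt)) with |(α, β¹, γ¹, …, βᴺ, γᴺ)| < ε, there exists an initial condition χ₀ ∈ ℝ^m such that the solution χ(t) with χ(0) = χ₀ satisfies θ(χ(t)) = σ(t) for all t ≥ 0. Then m ≥ 2N + 1. -/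
open Real Finset

/-- The trigonometric polynomial with coefficients `(α, β, γ)`. -/
noncomputable def trigPoly (N : ℕ) (α : ℝ) (β γ : Fin N → ℝ) : ℝ → ℝ :=
  fun t => α + ∑ n : Fin N, (β n * Real.sin ((n + 1 : ℕ) * t) + γ n * Real.cos ((n + 1 : ℕ) * t))

/-- The Euclidean norm of the coefficient vector `(α, β¹, γ¹, …, βᴺ, γᴺ)`. -/
noncomputable def coeffNorm (N : ℕ) (α : ℝ) (β γ : Fin N → ℝ) : ℝ :=
  Real.sqrt (α ^ 2 + ∑ n : Fin N, (β n ^ 2 + γ n ^ 2))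

open intervalIntegral ENNReal


lemma int_cos_all (j : ℤ) : ∫ t in (0:ℝ)..(2*π), Real.cos (j*t) = if j = 0 then 2*π else 0 := by
  rcases eq_or_ne j 0 with h|h
  · subst h; simp
  · rw [if_neg h]
    have hj' : (j:ℝ) ≠ 0 := Int.cast_ne_zero.mpr h
    rw [intervalIntegral.integral_comp_mul_left Real.cos hj']
    have h2 : (j:ℝ) * (2*π) = ((2*j : ℤ):ℝ) * π := by push_cast; ring
    have h3 : Real.sin ((j:ℝ) * (2*π)) = 0 := by rw [h2]; exact Real.sin_int_mul_pi _
    simp [integral_cos, h3]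

lemma int_sin_all (j : ℤ) : ∫ t in (0:ℝ)..(2*π), Real.sin (j*t) = 0 := by
  rcases eq_or_ne j 0 with h|h
  · subst h; simp
  · have hj' : (j:ℝ) ≠ 0 := Int.cast_ne_zero.mpr h
    rw [intervalIntegral.integral_comp_mul_left Real.sin hj']
    have h3 : Real.cos ((j:ℝ) * (2*π)) = 1 := Real.cos_int_mul_two_pi j
    simp [integral_sin, h3]
lemma int_comb (f g : ℝ → ℝ) (c : ℝ) (hf : Continuous f) (hg : Continuous g) :
    ∫ t in (0:ℝ)..(2*π), (f t + c * g t)/2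
      = ((∫ t in (0:ℝ)..(2*π), f t) + c * ∫ t in (0:ℝ)..(2*π), g t)/2 := by
  rw [intervalIntegral.integral_div,
    intervalIntegral.integral_add (hf.intervalIntegrable _ _)
      (by exact (continuous_const.mul hg).intervalIntegrable _ _ : IntervalIntegrable (fun t => c * g t) MeasureTheory.volume 0 (2*π)), intervalIntegral.integral_const_mul]

lemma int_ss (a b : ℕ) :
    ∫ t in (0:ℝ)..(2*π), Real.sin ((a+1 : ℕ) * t) * Real.sin ((b+1 : ℕ) * t)
      = if a = b then π else 0 := by
  have key : ∀ t : ℝ, Real.sin ((a+1:ℕ) * t) * Real.sin ((b+1:ℕ) * t)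
      = (Real.cos ((((a:ℤ) - b) : ℤ) * t) + (-1) * Real.cos ((((a:ℤ)+b+2) : ℤ) * t)) / 2 := by
    intro t
    have h1 : ((((a:ℤ) - b) : ℤ) : ℝ) * t = ((a+1:ℕ):ℝ) * t - ((b+1:ℕ):ℝ) * t := by
      push_cast; ring
    have h2 : ((((a:ℤ) + b + 2) : ℤ) : ℝ) * t = ((a+1:ℕ):ℝ) * t + ((b+1:ℕ):ℝ) * t := by
      push_cast; ring
    rw [h1, h2, Real.cos_sub, Real.cos_add]; ring
  simp only [key]
  rw [int_comb _ _ _ (by fun_prop) (by fun_prop), int_cos_all, int_cos_all]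
  rcases eq_or_ne a b with h|h
  · rw [if_pos (by omega), if_neg (by omega), if_pos h]; ring
  · rw [if_neg (by omega), if_neg (by omega), if_neg h]; ring

lemma int_cc (a b : ℕ) :
    ∫ t in (0:ℝ)..(2*π), Real.cos ((a+1 : ℕ) * t) * Real.cos ((b+1 : ℕ) * t)
      = if a = b then π else 0 := by
  have key : ∀ t : ℝ, Real.cos ((a+1:ℕ) * t) * Real.cos ((b+1:ℕ) * t)
      = (Real.cos ((((a:ℤ) - b) : ℤ) * t) + 1 * Real.cos ((((a:ℤ)+b+2) : ℤ) * t)) / 2 := by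
    intro t
    have h1 : ((((a:ℤ) - b) : ℤ) : ℝ) * t = ((a+1:ℕ):ℝ) * t - ((b+1:ℕ):ℝ) * t := by
      push_cast; ring
    have h2 : ((((a:ℤ) + b + 2) : ℤ) : ℝ) * t = ((a+1:ℕ):ℝ) * t + ((b+1:ℕ):ℝ) * t := by
      push_cast; ring
    rw [h1, h2, Real.cos_sub, Real.cos_add]; ring
  simp only [key]
  rw [int_comb _ _ _ (by fun_prop) (by fun_prop), int_cos_all, int_cos_all]
  rcases eq_or_ne a b with h|h
  · rw [if_pos (by omega), if_neg (by omega), if_pos h]; ring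
  · rw [if_neg (by omega), if_neg (by omega), if_neg h]; ring

lemma int_sc (a b : ℕ) :
    ∫ t in (0:ℝ)..(2*π), Real.sin ((a+1 : ℕ) * t) * Real.cos ((b+1 : ℕ) * t) = 0 := by
  have key : ∀ t : ℝ, Real.sin ((a+1:ℕ) * t) * Real.cos ((b+1:ℕ) * t)
      = (Real.sin ((((a:ℤ)+b+2) : ℤ) * t) + 1 * Real.sin ((((a:ℤ) - b) : ℤ) * t)) / 2 := by
    intro t
    have h1 : ((((a:ℤ) - b) : ℤ) : ℝ) * t = ((a+1:ℕ):ℝ) * t - ((b+1:ℕ):ℝ) * t := by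
      push_cast; ring
    have h2 : ((((a:ℤ) + b + 2) : ℤ) : ℝ) * t = ((a+1:ℕ):ℝ) * t + ((b+1:ℕ):ℝ) * t := by
      push_cast; ring
    rw [h1, h2, Real.sin_sub, Real.sin_add]; ring
  simp only [key]
  rw [int_comb _ _ _ (by fun_prop) (by fun_prop), int_sin_all, int_sin_all]
  ring

lemma int_s1 (a : ℕ) : ∫ t in (0:ℝ)..(2*π), Real.sin ((a+1 : ℕ) * t) = 0 := by
  have key : ∀ t : ℝ, Real.sin ((a+1:ℕ) * t) = Real.sin ((((a:ℤ)+1) : ℤ) * t) := by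
    intro t; norm_cast
  simp only [key]; exact int_sin_all _

lemma int_c1 (a : ℕ) : ∫ t in (0:ℝ)..(2*π), Real.cos ((a+1 : ℕ) * t) = 0 := by
  have key : ∀ t : ℝ, Real.cos ((a+1:ℕ) * t) = Real.cos ((((a:ℤ)+1) : ℤ) * t) := by
    intro t; norm_cast
  simp only [key]
  rw [int_cos_all, if_neg (by omega)]
lemma trig_cont (N : ℕ) (α : ℝ) (β γ : Fin N → ℝ) : Continuous (trigPoly N α β γ) := by
  unfold trigPoly; fun_prop

lemma trig_i0 (N : ℕ) (α : ℝ) (β γ : Fin N → ℝ) :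
    ∫ t in (0:ℝ)..(2*π), trigPoly N α β γ t = 2*π*α := by
  unfold trigPoly
  rw [intervalIntegral.integral_add intervalIntegrable_const
    ((Continuous.intervalIntegrable (by fun_prop) _ _)),
    intervalIntegral.integral_finset_sum (fun i _ => (Continuous.intervalIntegrable (by fun_prop) _ _))]
  have h : ∀ n : Fin N,
      (∫ t in (0:ℝ)..(2*π), (β n * Real.sin ((n + 1 : ℕ) * t) + γ n * Real.cos ((n + 1 : ℕ) * t))) = 0 := by
    intro n
    rw [intervalIntegral.integral_add ((Continuous.intervalIntegrable (by fun_prop) _ _))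
      ((Continuous.intervalIntegrable (by fun_prop) _ _)),
      intervalIntegral.integral_const_mul, intervalIntegral.integral_const_mul, int_s1, int_c1]
    ring
  rw [Finset.sum_congr rfl (fun n _ => h n)]
  simp [two_mul]

lemma trig_is (N : ℕ) (α : ℝ) (β γ : Fin N → ℝ) (k : Fin N) :
    ∫ t in (0:ℝ)..(2*π), trigPoly N α β γ t * Real.sin ((k + 1 : ℕ) * t) = π * β k := by
  unfold trigPoly
  simp only [add_mul, Finset.sum_mul]
  rw [intervalIntegral.integral_add ((Continuous.intervalIntegrable (by fun_prop) _ _))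
    ((Continuous.intervalIntegrable (by fun_prop) _ _)),
    intervalIntegral.integral_const_mul, int_s1,
    intervalIntegral.integral_finset_sum (fun i _ => (Continuous.intervalIntegrable (by fun_prop) _ _))]
  have h : ∀ n : Fin N,
      (∫ t in (0:ℝ)..(2*π), (β n * Real.sin ((n + 1 : ℕ) * t) * Real.sin ((k + 1 : ℕ) * t)
        + γ n * Real.cos ((n + 1 : ℕ) * t) * Real.sin ((k + 1 : ℕ) * t)))
      = (if (n:ℕ) = (k:ℕ) then β n * π else 0) := by
    intro n
    have key : ∀ t : ℝ, (β n * Real.sin ((n + 1 : ℕ) * t) * Real.sin ((k + 1 : ℕ) * t)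
        + γ n * Real.cos ((n + 1 : ℕ) * t) * Real.sin ((k + 1 : ℕ) * t))
        = β n * (Real.sin ((n + 1 : ℕ) * t) * Real.sin ((k + 1 : ℕ) * t))
          + γ n * (Real.sin ((k + 1 : ℕ) * t) * Real.cos ((n + 1 : ℕ) * t)) := fun t => by ring
    simp only [key]
    rw [intervalIntegral.integral_add ((Continuous.intervalIntegrable (by fun_prop) _ _))
      ((Continuous.intervalIntegrable (by fun_prop) _ _)),
      intervalIntegral.integral_const_mul, intervalIntegral.integral_const_mul, int_ss, int_sc]
    by_cases hnk : (n:ℕ) = (k:ℕ) <;> simp [hnk]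
  rw [Finset.sum_congr rfl (fun n _ => h n)]
  simp only [Fin.val_inj]
  rw [Finset.sum_ite_eq' Finset.univ k (fun n => β n * π)]
  simp; ring

lemma trig_ic (N : ℕ) (α : ℝ) (β γ : Fin N → ℝ) (k : Fin N) :
    ∫ t in (0:ℝ)..(2*π), trigPoly N α β γ t * Real.cos ((k + 1 : ℕ) * t) = π * γ k := by
  unfold trigPoly
  simp only [add_mul, Finset.sum_mul]
  rw [intervalIntegral.integral_add ((Continuous.intervalIntegrable (by fun_prop) _ _))
    ((Continuous.intervalIntegrable (by fun_prop) _ _)),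
    intervalIntegral.integral_const_mul, int_c1,
    intervalIntegral.integral_finset_sum (fun i _ => (Continuous.intervalIntegrable (by fun_prop) _ _))]
  have h : ∀ n : Fin N,
      (∫ t in (0:ℝ)..(2*π), (β n * Real.sin ((n + 1 : ℕ) * t) * Real.cos ((k + 1 : ℕ) * t)
        + γ n * Real.cos ((n + 1 : ℕ) * t) * Real.cos ((k + 1 : ℕ) * t)))
      = (if (n:ℕ) = (k:ℕ) then γ n * π else 0) := by
    intro n
    have key : ∀ t : ℝ, (β n * Real.sin ((n + 1 : ℕ) * t) * Real.cos ((k + 1 : ℕ) * t)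
        + γ n * Real.cos ((n + 1 : ℕ) * t) * Real.cos ((k + 1 : ℕ) * t))
        = β n * (Real.sin ((n + 1 : ℕ) * t) * Real.cos ((k + 1 : ℕ) * t))
          + γ n * (Real.cos ((n + 1 : ℕ) * t) * Real.cos ((k + 1 : ℕ) * t)) := fun t => by ring
    simp only [key]
    rw [intervalIntegral.integral_add ((Continuous.intervalIntegrable (by fun_prop) _ _))
      ((Continuous.intervalIntegrable (by fun_prop) _ _)),
      intervalIntegral.integral_const_mul, intervalIntegral.integral_const_mul, int_cc, int_sc]
    by_cases hnk : (n:ℕ) = (k:ℕ) <;> simp [hnk]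
  rw [Finset.sum_congr rfl (fun n _ => h n)]
  simp only [Fin.val_inj]
  rw [Finset.sum_ite_eq' Finset.univ k (fun n => γ n * π)]
  simp; ring
noncomputable def fourierMap (N : ℕ) (f : ℝ → ℝ) : ℝ × (Fin N → ℝ) × (Fin N → ℝ) :=
  ((2*π)⁻¹ * ∫ t in (0:ℝ)..(2*π), f t,
   fun n => π⁻¹ * ∫ t in (0:ℝ)..(2*π), f t * Real.sin ((n+1:ℕ)*t),
   fun n => π⁻¹ * ∫ t in (0:ℝ)..(2*π), f t * Real.cos ((n+1:ℕ)*t))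

lemma fourierMap_trigPoly (N : ℕ) (α : ℝ) (β γ : Fin N → ℝ) :
    fourierMap N (trigPoly N α β γ) = (α, β, γ) := by
  have hπ : (π:ℝ) ≠ 0 := Real.pi_ne_zero
  unfold fourierMap
  refine Prod.ext ?_ (Prod.ext ?_ ?_)
  · show (2*π)⁻¹ * ∫ t in (0:ℝ)..(2*π), trigPoly N α β γ t = α
    rw [trig_i0]; field_simp
  · show (fun n : Fin N => π⁻¹ * ∫ t in (0:ℝ)..(2*π), trigPoly N α β γ t * Real.sin ((n+1:ℕ)*t)) = β
    funext n; rw [trig_is]; field_simp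
  · show (fun n : Fin N => π⁻¹ * ∫ t in (0:ℝ)..(2*π), trigPoly N α β γ t * Real.cos ((n+1:ℕ)*t)) = γ
    funext n; rw [trig_ic]; field_simp

lemma fourierMap_congr (N : ℕ) {f h : ℝ → ℝ}
    (hfh : ∀ t ∈ Set.uIcc (0:ℝ) (2*π), f t = h t) : fourierMap N f = fourierMap N h := by
  have e1 : ∫ t in (0:ℝ)..(2*π), f t = ∫ t in (0:ℝ)..(2*π), h t :=
    intervalIntegral.integral_congr hfh
  have e2 : ∀ c : ℝ → ℝ, (∫ t in (0:ℝ)..(2*π), f t * c t) = ∫ t in (0:ℝ)..(2*π), h t * c t :=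
    fun c => intervalIntegral.integral_congr (fun t ht => by rw [hfh t ht])
  unfold fourierMap
  refine Prod.ext ?_ (Prod.ext ?_ ?_)
  · show (2*π)⁻¹ * ∫ t in (0:ℝ)..(2*π), f t = (2*π)⁻¹ * ∫ t in (0:ℝ)..(2*π), h t
    rw [e1]
  · show (fun n : Fin N => π⁻¹ * ∫ t in (0:ℝ)..(2*π), f t * Real.sin ((n+1:ℕ)*t))
      = (fun n : Fin N => π⁻¹ * ∫ t in (0:ℝ)..(2*π), h t * Real.sin ((n+1:ℕ)*t))
    funext n; rw [e2]
  · show (fun n : Fin N => π⁻¹ * ∫ t in (0:ℝ)..(2*π), f t * Real.cos ((n+1:ℕ)*t))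
      = (fun n : Fin N => π⁻¹ * ∫ t in (0:ℝ)..(2*π), h t * Real.cos ((n+1:ℕ)*t))
    funext n; rw [e2]

lemma fourierMap_dist (N : ℕ) {f h : ℝ → ℝ} {C : ℝ}
    (hf : ContinuousOn f (Set.uIcc (0:ℝ) (2*π))) (hh : ContinuousOn h (Set.uIcc (0:ℝ) (2*π)))
    (hC : 0 ≤ C) (hb : ∀ t ∈ Set.uIcc (0:ℝ) (2*π), |f t - h t| ≤ C) :
    dist (fourierMap N f) (fourierMap N h) ≤ 2*C := by
  have hπ : (0:ℝ) < π := Real.pi_pos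
  have h2π : (0:ℝ) ≤ 2*π := by positivity
  have key : ∀ (c : ℝ → ℝ), Continuous c → (∀ t, |c t| ≤ 1) →
      |(∫ t in (0:ℝ)..(2*π), f t * c t) - ∫ t in (0:ℝ)..(2*π), h t * c t| ≤ C * (2*π) := by
    intro c hc hc1
    rw [← intervalIntegral.integral_sub
      (by exact (hf.mul hc.continuousOn).intervalIntegrable : IntervalIntegrable (fun t => f t * c t) MeasureTheory.volume 0 (2*π)) (by exact (hh.mul hc.continuousOn).intervalIntegrable : IntervalIntegrable (fun t => h t * c t) MeasureTheory.volume 0 (2*π))]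
    have hbd : ∀ t ∈ Set.uIoc (0:ℝ) (2*π), ‖f t * c t - h t * c t‖ ≤ C := by
      intro t ht
      have ht' : t ∈ Set.uIcc (0:ℝ) (2*π) := Set.uIoc_subset_uIcc ht
      have he : f t * c t - h t * c t = (f t - h t) * c t := by ring
      rw [he, Real.norm_eq_abs, abs_mul]
      calc |f t - h t| * |c t| ≤ C * 1 :=
        mul_le_mul (hb t ht') (hc1 t) (abs_nonneg _) hC
      _ = C := mul_one C
    have := intervalIntegral.norm_integral_le_of_norm_le_const hbd
    simpa [abs_of_nonneg h2π] using this
  have k1 : |(∫ t in (0:ℝ)..(2*π), f t) - ∫ t in (0:ℝ)..(2*π), h t| ≤ C * (2*π) := by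
    have := key (fun _ => 1) continuous_const (by intro t; simp)
    simpa using this
  have ksin : ∀ n : Fin N,
      |(∫ t in (0:ℝ)..(2*π), f t * Real.sin ((n+1:ℕ)*t))
        - ∫ t in (0:ℝ)..(2*π), h t * Real.sin ((n+1:ℕ)*t)| ≤ C * (2*π) :=
    fun n => key _ (by fun_prop) (fun t => Real.abs_sin_le_one _)
  have kcos : ∀ n : Fin N,
      |(∫ t in (0:ℝ)..(2*π), f t * Real.cos ((n+1:ℕ)*t))
        - ∫ t in (0:ℝ)..(2*π), h t * Real.cos ((n+1:ℕ)*t)| ≤ C * (2*π) :=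
    fun n => key _ (by fun_prop) (fun t => Real.abs_cos_le_one _)
  have h2C : (0:ℝ) ≤ 2*C := by linarith
  unfold fourierMap
  rw [Prod.dist_eq]
  apply max_le
  · show dist ((2*π)⁻¹ * ∫ t in (0:ℝ)..(2*π), f t) ((2*π)⁻¹ * ∫ t in (0:ℝ)..(2*π), h t) ≤ 2*C
    rw [Real.dist_eq, ← mul_sub, abs_mul, abs_of_nonneg (by positivity : (0:ℝ) ≤ (2*π)⁻¹)]
    calc (2*π)⁻¹ * |(∫ t in (0:ℝ)..(2*π), f t) - ∫ t in (0:ℝ)..(2*π), h t|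
        ≤ (2*π)⁻¹ * (C * (2*π)) := mul_le_mul_of_nonneg_left k1 (by positivity)
      _ = C := by field_simp; try ring
      _ ≤ 2*C := by linarith
  · rw [Prod.dist_eq]
    apply max_le <;> [skip; skip] <;>
    · refine (dist_pi_le_iff h2C).2 fun n => ?_
      rw [Real.dist_eq, ← mul_sub, abs_mul, abs_of_nonneg (by positivity : (0:ℝ) ≤ π⁻¹)]
      first
      | calc π⁻¹ * |(∫ t in (0:ℝ)..(2*π), f t * Real.sin ((n+1:ℕ)*t))
            - ∫ t in (0:ℝ)..(2*π), h t * Real.sin ((n+1:ℕ)*t)|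
            ≤ π⁻¹ * (C * (2*π)) := mul_le_mul_of_nonneg_left (ksin n) (by positivity)
          _ = 2*C := by field_simp; try ring
      | calc π⁻¹ * |(∫ t in (0:ℝ)..(2*π), f t * Real.cos ((n+1:ℕ)*t))
            - ∫ t in (0:ℝ)..(2*π), h t * Real.cos ((n+1:ℕ)*t)|
            ≤ π⁻¹ * (C * (2*π)) := mul_le_mul_of_nonneg_left (kcos n) (by positivity)
          _ = 2*C := by field_simp; try ring
/-- If the smooth finite-dimensional autonomous system `χ' = g(χ)` on `ℝ^m` with output
`v = θ(χ)` can reproduce, from suitable initial conditions, every trigonometric polynomial of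
degree `N` with coefficient vector of norm `< ε`, then `m ≥ 2N + 1`. -/
theorem stmt_6 (m : ℕ) (g : EuclideanSpace ℝ (Fin m) → EuclideanSpace ℝ (Fin m))
    (hg : ContDiff ℝ 1 g) (L : NNReal) (hgL : LipschitzWith L g)
    (θ : EuclideanSpace ℝ (Fin m) → ℝ) (hθ : ContDiff ℝ 1 θ)
    (ε : ℝ) (hε : 0 < ε) (N : ℕ)
    (hrepr : ∀ (α : ℝ) (β γ : Fin N → ℝ), coeffNorm N α β γ < ε →
      ∃ χ : ℝ → EuclideanSpace ℝ (Fin m),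
        (∀ t : ℝ, HasDerivAt χ (g (χ t)) t) ∧
        ∀ t : ℝ, 0 ≤ t → θ (χ t) = trigPoly N α β γ t) :
    2 * N + 1 ≤ m := by
  by_contra hm
  push_neg at hm
  classical
  have hπ : (0:ℝ) < π := Real.pi_pos
  have h2π : (0:ℝ) ≤ 2*π := by positivity
  -- choose solutions
  have hSex : ∀ x : EuclideanSpace ℝ (Fin m), ∃ χ : ℝ → EuclideanSpace ℝ (Fin m),
      (∃ ψ : ℝ → EuclideanSpace ℝ (Fin m), (∀ t, HasDerivAt ψ (g (ψ t)) t) ∧ ψ 0 = x) →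
      ((∀ t, HasDerivAt χ (g (χ t)) t) ∧ χ 0 = x) := by
    intro x
    by_cases hx : ∃ ψ : ℝ → EuclideanSpace ℝ (Fin m), (∀ t, HasDerivAt ψ (g (ψ t)) t) ∧ ψ 0 = x
    · obtain ⟨ψ, h1, h2⟩ := hx; exact ⟨ψ, fun _ => ⟨h1, h2⟩⟩
    · exact ⟨fun _ => x, fun hc => absurd hc hx⟩
  choose sol hsol using hSex
  set S : Set (EuclideanSpace ℝ (Fin m)) :=
    {x | ∃ ψ : ℝ → EuclideanSpace ℝ (Fin m), (∀ t, HasDerivAt ψ (g (ψ t)) t) ∧ ψ 0 = x} with hSdef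
  have hmemS : ∀ x ∈ S, (∀ t, HasDerivAt (sol x) (g (sol x t)) t) ∧ sol x 0 = x :=
    fun x hx => hsol x hx
  have hsolc : ∀ x ∈ S, Continuous (sol x) := fun x hx =>
    continuous_iff_continuousAt.2 fun t => ((hmemS x hx).1 t).continuousAt
  -- uniqueness
  have huniq : ∀ x ∈ S, ∀ χ : ℝ → EuclideanSpace ℝ (Fin m),
      (∀ t, HasDerivAt χ (g (χ t)) t) → χ 0 = x →
      Set.EqOn (sol x) χ (Set.Icc 0 (2*π)) := by
    intro x hx χ hχ hχ0
    apply ODE_solution_unique (v := fun _ y => g y) (fun _ => hgL)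
      (fun t _ => ((hmemS x hx).1 t).continuousAt.continuousWithinAt)
      (fun t _ => ((hmemS x hx).1 t).hasDerivWithinAt)
      (fun t _ => (hχ t).continuousAt.continuousWithinAt)
      (fun t _ => (hχ t).hasDerivWithinAt)
    rw [(hmemS x hx).2, hχ0]
  -- Gronwall
  have hgron : ∀ x ∈ S, ∀ y ∈ S, ∀ t ∈ Set.Icc (0:ℝ) (2*π),
      dist (sol x t) (sol y t) ≤ dist x y * Real.exp (L * (2*π)) := by
    intro x hx y hy t ht
    have h := dist_le_of_trajectories_ODE (v := fun _ y => g y) (fun _ => hgL)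
      (fun s _ => ((hmemS x hx).1 s).continuousAt.continuousWithinAt)
      (fun s _ => ((hmemS x hx).1 s).hasDerivWithinAt)
      (fun s _ => ((hmemS y hy).1 s).continuousAt.continuousWithinAt)
      (fun s _ => ((hmemS y hy).1 s).hasDerivWithinAt)
      (le_of_eq (by rw [(hmemS x hx).2, (hmemS y hy).2])) t ht
    calc dist (sol x t) (sol y t) ≤ dist x y * Real.exp (L * (t - 0)) := h
      _ ≤ dist x y * Real.exp (L * (2*π)) := by
          apply mul_le_mul_of_nonneg_left _ dist_nonneg
          apply Real.exp_le_exp.2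
          have h1 := ht.1; have h2 := ht.2
          have hL := L.coe_nonneg
          nlinarith
  -- θ Lipschitz on balls
  have θlip : ∀ r : ℝ, ∃ K : NNReal,
      LipschitzOnWith K θ (Metric.closedBall (0 : EuclideanSpace ℝ (Fin m)) r) := by
    intro r
    obtain ⟨C, hC⟩ := (isCompact_closedBall (0 : EuclideanSpace ℝ (Fin m)) r).exists_bound_of_continuousOn
      ((hθ.continuous_fderiv one_ne_zero).continuousOn)
    refine ⟨C.toNNReal, Convex.lipschitzOnWith_of_nnnorm_fderiv_le
      (fun x _ => hθ.differentiable one_ne_zero x) (fun x hx => ?_) (convex_closedBall _ _)⟩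
    rw [← norm_toNNReal]
    exact Real.toNNReal_mono (hC x hx)
  -- the map
  set F : EuclideanSpace ℝ (Fin m) → ℝ × (Fin N → ℝ) × (Fin N → ℝ) :=
    fun x => fourierMap N (fun t => θ (sol x t)) with hF
  set δ : ℝ := ε / (2*N+1) with hδdef
  have hδ : 0 < δ := by positivity
  -- surjectivity
  have hsurj : Metric.ball (0 : ℝ × (Fin N → ℝ) × (Fin N → ℝ)) δ ⊆ F '' S := by
    rintro ⟨α, β, γ⟩ hv
    rw [Metric.mem_ball] at hv
    have hα : |α| < δ := by
      refine lt_of_le_of_lt ?_ hv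
      rw [Prod.dist_eq]
      simpa using (le_max_left (dist α (0:ℝ)) _).trans (le_max_left _ _)
    have hβγ : ∀ v : Fin N → ℝ, (∀ n, dist (v n) 0 ≤ dist ((β, γ)) ((0,0) : (Fin N → ℝ) × (Fin N → ℝ))) →
        True := fun _ _ => trivial
    have hβ : ∀ n, |β n| < δ := by
      intro n
      refine lt_of_le_of_lt ?_ hv
      rw [Prod.dist_eq]
      refine le_trans ?_ (le_max_right _ _)
      rw [Prod.dist_eq]
      refine le_trans ?_ (le_max_left _ _)
      simpa using dist_le_pi_dist β (0 : Fin N → ℝ) n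
    have hγ : ∀ n, |γ n| < δ := by
      intro n
      refine lt_of_le_of_lt ?_ hv
      rw [Prod.dist_eq]
      refine le_trans ?_ (le_max_right _ _)
      rw [Prod.dist_eq]
      refine le_trans ?_ (le_max_right _ _)
      simpa using dist_le_pi_dist γ (0 : Fin N → ℝ) n
    have hNd : (1:ℝ) ≤ 2*N+1 := by
      have : (0:ℝ) ≤ N := Nat.cast_nonneg N
      linarith
    have hεδ : ε = (2*N+1) * δ := by
      rw [hδdef]; field_simp
    have hnorm : coeffNorm N α β γ < ε := by
      have hα2 : α^2 < δ^2 := by nlinarith [abs_nonneg α, sq_abs α]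
      have hterm : ∀ n : Fin N, β n^2 + γ n^2 ≤ 2*δ^2 := by
        intro n
        have h1 := (hβ n).le; have h2 := (hγ n).le
        nlinarith [abs_nonneg (β n), abs_nonneg (γ n), sq_abs (β n), sq_abs (γ n)]
      have hsum : ∑ n : Fin N, (β n^2 + γ n^2) ≤ (N:ℝ) * (2*δ^2) := by
        calc ∑ n : Fin N, (β n^2 + γ n^2) ≤ ∑ _n : Fin N, 2*δ^2 :=
              Finset.sum_le_sum (fun n _ => hterm n)
          _ = (N:ℝ) * (2*δ^2) := by simp [Finset.sum_const, Finset.card_univ, mul_comm]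
      have htot : α^2 + ∑ n : Fin N, (β n^2 + γ n^2) < (2*N+1) * δ^2 := by
        have he : ((2*N+1):ℝ) * δ^2 = δ^2 + (N:ℝ) * (2*δ^2) := by push_cast; ring
        linarith
      have hle : ((2*N+1):ℝ) * δ^2 ≤ ε^2 := by
        rw [hεδ]; nlinarith [hδ.le]
      calc coeffNorm N α β γ < Real.sqrt ((2*N+1) * δ^2) :=
            Real.sqrt_lt_sqrt (by positivity) htot
        _ ≤ Real.sqrt (ε^2) := Real.sqrt_le_sqrt hle
        _ = ε := Real.sqrt_sq hε.le
    obtain ⟨χ, hχ, hθχ⟩ := hrepr α β γ hnorm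
    have hxS : χ 0 ∈ S := ⟨χ, hχ, rfl⟩
    refine ⟨χ 0, hxS, ?_⟩
    show fourierMap N (fun t => θ (sol (χ 0) t)) = (α, β, γ)
    rw [fourierMap_congr N (h := trigPoly N α β γ) ?_, fourierMap_trigPoly]
    intro t ht
    rw [Set.uIcc_of_le h2π] at ht
    rw [huniq (χ 0) hxS χ hχ rfl ht]
    exact hθχ t ht.1
  -- Lipschitz on pieces
  have hlip : ∀ R : ℕ, ∃ K : NNReal, LipschitzOnWith K F (S ∩ Metric.closedBall 0 R) := by
    intro R
    have h00 : coeffNorm N 0 0 0 < ε := by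
      unfold coeffNorm; simpa using hε
    obtain ⟨χs, hχs, -⟩ := hrepr 0 0 0 h00
    have hxsS : χs 0 ∈ S := ⟨χs, hχs, rfl⟩
    obtain ⟨M, hM⟩ := (isCompact_Icc (a := (0:ℝ)) (b := 2*π)).exists_bound_of_continuousOn
      ((hsolc _ hxsS).continuousOn)
    set R' : ℝ := M + ((R:ℝ) + ‖χs 0‖) * Real.exp (L*(2*π)) with hR'
    obtain ⟨Kθ, hKθ⟩ := θlip R'
    have htraj : ∀ x ∈ S ∩ Metric.closedBall (0 : EuclideanSpace ℝ (Fin m)) (R:ℝ),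
        ∀ t ∈ Set.Icc (0:ℝ) (2*π),
        sol x t ∈ Metric.closedBall (0 : EuclideanSpace ℝ (Fin m)) R' := by
      intro x hx t ht
      have h1 : dist (sol x t) (sol (χs 0) t) ≤ dist x (χs 0) * Real.exp (L*(2*π)) :=
        hgron x hx.1 (χs 0) hxsS t ht
      have h2 : dist x (χs 0) ≤ (R:ℝ) + ‖χs 0‖ := by
        have hx2 : ‖x‖ ≤ (R:ℝ) := by
          have := hx.2; rwa [Metric.mem_closedBall, dist_zero_right] at this
        calc dist x (χs 0) ≤ ‖x‖ + ‖χs 0‖ := dist_le_norm_add_norm _ _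
          _ ≤ (R:ℝ) + ‖χs 0‖ := by linarith
      have h3 : dist (sol x t) (sol (χs 0) t) ≤ ((R:ℝ) + ‖χs 0‖) * Real.exp (L*(2*π)) := by
        refine h1.trans (mul_le_mul_of_nonneg_right h2 (Real.exp_nonneg _))
      have h4 : ‖sol (χs 0) t‖ ≤ M := hM t ht
      rw [Metric.mem_closedBall, dist_zero_right]
      calc ‖sol x t‖ = dist (sol x t) 0 := (dist_zero_right _).symm
        _ ≤ dist (sol x t) (sol (χs 0) t) + dist (sol (χs 0) t) 0 := dist_triangle _ _ _
        _ ≤ ((R:ℝ) + ‖χs 0‖) * Real.exp (L*(2*π)) + M := by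
            rw [dist_zero_right]; linarith
        _ = R' := by rw [hR']; ring
    set C : ℝ := (Kθ : ℝ) * Real.exp (L*(2*π)) with hCdef
    have hC0 : 0 ≤ C := by positivity
    refine ⟨(2*C).toNNReal, ?_⟩
    rw [lipschitzOnWith_iff_dist_le_mul]
    intro x hx y hy
    have hcx : ContinuousOn (fun t => θ (sol x t)) (Set.uIcc (0:ℝ) (2*π)) :=
      (hθ.continuous.comp (hsolc x hx.1)).continuousOn
    have hcy : ContinuousOn (fun t => θ (sol y t)) (Set.uIcc (0:ℝ) (2*π)) :=
      (hθ.continuous.comp (hsolc y hy.1)).continuousOn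
    have hθb : ∀ t ∈ Set.uIcc (0:ℝ) (2*π),
        |θ (sol x t) - θ (sol y t)| ≤ C * dist x y := by
      intro t ht
      rw [Set.uIcc_of_le h2π] at ht
      calc |θ (sol x t) - θ (sol y t)| = dist (θ (sol x t)) (θ (sol y t)) :=
            (Real.dist_eq _ _).symm
        _ ≤ (Kθ:ℝ) * dist (sol x t) (sol y t) :=
            hKθ.dist_le_mul _ (htraj x hx t ht) _ (htraj y hy t ht)
        _ ≤ (Kθ:ℝ) * (dist x y * Real.exp (L*(2*π))) :=
            mul_le_mul_of_nonneg_left (hgron x hx.1 y hy.1 t ht) Kθ.coe_nonneg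
        _ = C * dist x y := by rw [hCdef]; ring
    have hFd := fourierMap_dist N hcx hcy (by positivity) hθb
    calc dist (F x) (F y) ≤ 2*(C * dist x y) := hFd
      _ = (2*C) * dist x y := by ring
      _ ≤ ((2*C).toNNReal : ℝ) * dist x y :=
          mul_le_mul_of_nonneg_right (Real.le_coe_toNNReal _) dist_nonneg
  -- dimension argument
  have hd1 : dimH (F '' S) ≤ (m : ℝ≥0∞) := by
    have himg : F '' S = ⋃ R : ℕ, F '' (S ∩ Metric.closedBall 0 R) := by
      apply Set.Subset.antisymm
      · rintro _ ⟨x, hx, rfl⟩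
        obtain ⟨R, hR⟩ := exists_nat_ge ‖x‖
        exact Set.mem_iUnion.2 ⟨R, Set.mem_image_of_mem F
          ⟨hx, by rwa [Metric.mem_closedBall, dist_zero_right]⟩⟩
      · exact Set.iUnion_subset fun R => Set.image_mono Set.inter_subset_left
    rw [himg, dimH_iUnion]
    refine iSup_le fun R => ?_
    obtain ⟨K, hK⟩ := hlip R
    calc dimH (F '' (S ∩ Metric.closedBall 0 R)) ≤ dimH (S ∩ Metric.closedBall 0 R) :=
          hK.dimH_image_le
      _ ≤ dimH (Set.univ : Set (EuclideanSpace ℝ (Fin m))) := dimH_mono (Set.subset_univ _)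
      _ = (Module.finrank ℝ (EuclideanSpace ℝ (Fin m)) : ℝ≥0∞) :=
          dimH_univ_eq_finrank (EuclideanSpace ℝ (Fin m))
      _ = (m : ℝ≥0∞) := by rw [finrank_euclideanSpace_fin]
  have hfr : Module.finrank ℝ (ℝ × (Fin N → ℝ) × (Fin N → ℝ)) = 2*N+1 := by
    simp [Module.finrank_prod, Module.finrank_pi, Module.finrank_self]
    omega
  have hd2 : ((2*N+1 : ℕ) : ℝ≥0∞) ≤ dimH (F '' S) := by
    have hb := dimH_of_mem_nhds
      (Metric.ball_mem_nhds (0 : ℝ × (Fin N → ℝ) × (Fin N → ℝ)) hδ)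
    calc ((2*N+1:ℕ) : ℝ≥0∞)
        = (Module.finrank ℝ (ℝ × (Fin N → ℝ) × (Fin N → ℝ)) : ℝ≥0∞) := by rw [hfr]
      _ = dimH (Metric.ball (0 : ℝ × (Fin N → ℝ) × (Fin N → ℝ)) δ) := by rw [hb]
      _ ≤ dimH (F '' S) := dimH_mono hsurj
  have hfin : (2*N+1 : ℕ) ≤ m := by exact_mod_cast hd2.trans hd1
  omega
end

section
/- Let φ : ℝ × ℝ^n → ℝ^n be a continuous flow map (φ(0,x) = x and φ(s+t, x) = φ(t, φ(s,x))), and suppose x : [0,∞) → ℝ^n is a bounded trajectory, i.e. x(t) = φ(t − s, x(s)) for all 0 ≤ s ≤ t, satisfying lim_{t→∞} |x(t + T) − x(t)| = 0 for some T > 0. Let y : ℝ → ℝ^n be a complete trajectory of φ contained in the ω-limit set of x, i.e., there exist times t_k → ∞ with x(t_k) → y(0). Then y is T-periodic: y(t + T) = y(t) for all t. -/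
open Filter Topology

/-- Complete trajectories of a continuous flow contained in the ω-limit set of a bounded
trajectory that is asymptotically `T`-periodic are themselves `T`-periodic. -/
theorem stmt_15 (n : ℕ) (φ : ℝ → EuclideanSpace ℝ (Fin n) → EuclideanSpace ℝ (Fin n))
    (hφcont : Continuous (fun p : ℝ × EuclideanSpace ℝ (Fin n) => φ p.1 p.2))
    (hφ0 : ∀ x, φ 0 x = x)
    (hφadd : ∀ s t x, φ (s + t) x = φ t (φ s x))
    (x : ℝ → EuclideanSpace ℝ (Fin n))
    (hxbdd : ∃ C : ℝ, ∀ t ≥ (0:ℝ), ‖x t‖ ≤ C)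
    (hxtraj : ∀ s t : ℝ, 0 ≤ s → s ≤ t → x t = φ (t - s) (x s))
    (T : ℝ) (hT : 0 < T)
    (hper : Tendsto (fun t => ‖x (t + T) - x t‖) atTop (nhds 0))
    (y : ℝ → EuclideanSpace ℝ (Fin n))
    (hy : ∀ t : ℝ, y t = φ t (y 0))
    (hω : ∃ u : ℕ → ℝ, Tendsto u atTop atTop ∧
      Tendsto (fun k => x (u k)) atTop (nhds (y 0))) :
    ∀ t : ℝ, y (t + T) = y t := by
  obtain ⟨u, hu, hux⟩ := hω
  intro t
  -- a general convergence lemma for shifted times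
  have key : ∀ s : ℝ, Tendsto (fun k => x (u k + s)) atTop (nhds (y s)) := by
    intro s
    have ct : Continuous (φ s) := hφcont.comp (Continuous.prodMk_right s)
    have h1 : Tendsto (fun k => φ s (x (u k))) atTop (nhds (y s)) := by
      rw [hy s]
      exact (ct.tendsto _).comp hux
    refine h1.congr' ?_
    filter_upwards [hu.eventually (eventually_ge_atTop (max 0 (-s)))] with k hk
    have h0 : 0 ≤ u k := le_trans (le_max_left _ _) hk
    have h1' : 0 ≤ u k + s := by
      have : -s ≤ u k := le_trans (le_max_right _ _) hk
      linarith
    have e1 : x (u k) = φ (u k) (x 0) := by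
      simpa using hxtraj 0 (u k) le_rfl h0
    have e2 : x (u k + s) = φ (u k + s) (x 0) := by
      simpa using hxtraj 0 (u k + s) le_rfl h1'
    rw [e1, e2, hφadd]
  have h2 : Tendsto (fun k => x (u k + t + T)) atTop (nhds (y (t + T))) := by
    have := key (t + T)
    simpa [← add_assoc] using this
  have h1 : Tendsto (fun k => x (u k + t)) atTop (nhds (y t)) := key t
  have h3 : Tendsto (fun k => ‖x (u k + t + T) - x (u k + t)‖) atTop (nhds 0) :=
    hper.comp (tendsto_atTop_add_const_right _ t hu)
  have h4 : Tendsto (fun k => ‖x (u k + t + T) - x (u k + t)‖) atTop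
      (nhds ‖y (t + T) - y t‖) := (h2.sub h1).norm
  have := tendsto_nhds_unique h4 h3
  have : y (t + T) - y t = 0 := by
    rwa [norm_eq_zero] at this
  exact sub_eq_zero.mp this
end
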